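/- Let Y be a free ℤ-module of finite rank, n a positive integer, and M a ℤ-submodule of Y with n•Y ⊆ M. Let F be a field whose unit group Fˣ contains an element of order exactly n (a primitive n-th root of unity). Regarding Fˣ as a ℤ-module, the kernel of the map M ⊗_ℤ Fˣ → Y ⊗_ℤ Fˣ induced by the inclusion M ⊆ Y is contained in the image of the map (n•Y) ⊗_ℤ Fˣ → M ⊗_ℤ Fˣ induced by the inclusion n•Y ⊆ M. -/

import Mathlib

open TensorProduct

/-- Lemma `Ker(i_{Q,n}) ⊆ Im(i_{nY})`: for a finite-rank free `ℤ`-module `Y`,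
a submodule `M` with `nY ⊆ M`, and a field `F` whose unit group contains an
element of order exactly `n`, the kernel of `M ⊗ Fˣ → Y ⊗ Fˣ` is contained in
the image of `(nY) ⊗ Fˣ → M ⊗ Fˣ`. -/
theorem ker_tensor_le_range_tensor
    {Y : Type*} [AddCommGroup Y] [Module.Free ℤ Y] [Module.Finite ℤ Y]
    (n : ℕ) (hn : 0 < n) (M : Submodule ℤ Y)
    (hnY : Submodule.map ((n : ℤ) • (LinearMap.id : Y →ₗ[ℤ] Y)) ⊤ ≤ M)
    {F : Type*} [Field F] (ζ : Fˣ) (hζ : orderOf ζ = n) :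
    LinearMap.ker (LinearMap.rTensor (Additive Fˣ) (Submodule.subtype M)) ≤
      LinearMap.range (LinearMap.rTensor (Additive Fˣ)
        (Submodule.inclusion hnY)) := by
  classical
  have : NeZero n := ⟨hn.ne'⟩
  have hprim : IsPrimitiveRoot ζ n := hζ ▸ IsPrimitiveRoot.orderOf ζ
  set A := Additive Fˣ
  obtain ⟨m, snf⟩ := M.smithNormalForm (Module.Free.chooseBasis ℤ Y)
  -- membership of n • bM (f j) in M
  have hmemM : ∀ j : Fin m, (n : ℤ) • snf.bM (snf.f j) ∈ M := by
    intro j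
    exact hnY ⟨snf.bM (snf.f j), trivial, by simp⟩
  -- divisibility: a j * r j = n
  have hdvd : ∀ j : Fin m, ∃ r : ℤ, snf.a j * r = (n : ℤ) := by
    intro j
    have h := congrArg (fun g => g (⟨_, hmemM j⟩ : M))
      (snf.coord_apply_embedding_eq_smul_coord (i := j))
    simp only [LinearMap.coe_comp, Function.comp_apply, Submodule.coe_subtype,
      LinearMap.smul_apply, smul_eq_mul] at h
    refine ⟨snf.bN.coord j ⟨_, hmemM j⟩, ?_⟩
    rw [← h]
    simp [Module.Basis.coord_apply]
  -- coordinate functionals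
  set π : (Module.Free.ChooseBasisIndex ℤ Y) → (Y ⊗[ℤ] A →ₗ[ℤ] A) := fun i =>
    (TensorProduct.lid ℤ A).toLinearMap ∘ₗ LinearMap.rTensor A (snf.bM.coord i) with hπ
  set ρ : Fin m → ((M : Submodule ℤ Y) ⊗[ℤ] A →ₗ[ℤ] A) := fun j =>
    (TensorProduct.lid ℤ A).toLinearMap ∘ₗ LinearMap.rTensor A (snf.bN.coord j) with hρ
  -- decomposition of elements of M ⊗ A
  have hdec : ∀ x : (M : Submodule ℤ Y) ⊗[ℤ] A, x = ∑ j : Fin m, snf.bN j ⊗ₜ[ℤ] ρ j x := by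
    intro x
    induction x using TensorProduct.induction_on with
    | zero => simp
    | tmul w t =>
      have h1 : ∀ j, ρ j (w ⊗ₜ[ℤ] t) = snf.bN.repr w j • t := by
        intro j
        change (TensorProduct.lid ℤ A) (LinearMap.rTensor A (snf.bN.coord j) (w ⊗ₜ t)) = _
        simp [Module.Basis.coord_apply]
      calc w ⊗ₜ[ℤ] t = (∑ j, snf.bN.repr w j • snf.bN j) ⊗ₜ[ℤ] t := by
            rw [snf.bN.sum_repr]
        _ = ∑ j : Fin m, snf.bN j ⊗ₜ[ℤ] ρ j (w ⊗ₜ[ℤ] t) := by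
            rw [sum_tmul]
            exact Finset.sum_congr rfl fun j _ => by rw [h1, smul_tmul]
    | add x y hx hy =>
      conv_lhs => rw [hx, hy]
      rw [← Finset.sum_add_distrib]
      exact Finset.sum_congr rfl fun j _ => by rw [map_add, tmul_add]
  -- the key kernel computation
  have hker : ∀ j : Fin m, π (snf.f j) ∘ₗ LinearMap.rTensor A (Submodule.subtype M)
      = snf.a j • ρ j := by
    intro j
    rw [hπ, hρ]
    dsimp only
    apply TensorProduct.ext'
    intro w t
    have e := congrArg (fun g => g w) (snf.coord_apply_embedding_eq_smul_coord (i := j))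
    simp only [LinearMap.coe_comp, Function.comp_apply, Submodule.coe_subtype,
      LinearMap.smul_apply, smul_eq_mul] at e
    change (TensorProduct.lid ℤ A) (LinearMap.rTensor A (snf.bM.coord (snf.f j))
      (LinearMap.rTensor A M.subtype (w ⊗ₜ t))) =
      snf.a j • (TensorProduct.lid ℤ A) (LinearMap.rTensor A (snf.bN.coord j) (w ⊗ₜ t))
    simp only [LinearMap.rTensor_tmul, TensorProduct.lid_tmul, Submodule.coe_subtype, e, mul_smul]
  intro x hx
  rw [LinearMap.mem_ker] at hx
  rw [hdec x]
  apply Submodule.sum_mem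
  intro j _
  -- each coordinate is torsion
  have hzero : snf.a j • ρ j x = 0 := by
    have := congrArg (fun g => g x) (hker j)
    erw [LinearMap.comp_apply, hx, map_zero] at this
    exact this.symm
  obtain ⟨r, hr⟩ := hdvd j
  have haj : snf.a j ≠ 0 := by
    intro h0
    rw [h0, zero_mul] at hr
    exact hn.ne' (by exact_mod_cast hr.symm)
  have hu1 : (Additive.toMul (ρ j x)) ^ (snf.a j) = 1 := by
    have := congrArg Additive.toMul hzero
    rwa [toMul_zsmul, toMul_zero] at this
  set u : Fˣ := Additive.toMul (ρ j x) with hu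
  have hord : (orderOf u : ℤ) ∣ snf.a j := orderOf_dvd_iff_zpow_eq_one.mpr hu1
  have hordn : orderOf u ∣ n := by
    have h2 : (orderOf u : ℤ) ∣ (n : ℤ) := hord.trans ⟨r, hr.symm⟩
    exact_mod_cast h2
  have hun : u ^ n = 1 := orderOf_dvd_iff_pow_eq_one.mp hordn
  have humem : u ∈ Subgroup.zpowers ζ := by
    rw [hprim.zpowers_eq]
    exact (mem_rootsOfUnity n u).mpr hun
  obtain ⟨k, hk⟩ := Subgroup.mem_zpowers_iff.mp humem
  have hka : ζ ^ (k * snf.a j) = 1 := by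
    rw [zpow_mul, hk]
    exact hu1
  have hnka : ((n : ℕ) : ℤ) ∣ k * snf.a j := by
    rw [← hζ]
    exact orderOf_dvd_iff_zpow_eq_one.mpr hka
  obtain ⟨q, hq⟩ := hnka
  have hkrq : k = r * q := by
    apply mul_left_cancel₀ haj
    rw [mul_comm (snf.a j) k, hq, ← hr, mul_assoc]
  have hc : ρ j x = r • Additive.ofMul (ζ ^ q) := by
    apply Additive.toMul.injective
    rw [toMul_zsmul, toMul_ofMul, ← zpow_mul, mul_comm q r, ← hkrq, hk, ← hu]
  refine ⟨(⟨(n : ℤ) • snf.bM (snf.f j), ⟨snf.bM (snf.f j), trivial, by simp⟩⟩ :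
      Submodule.map ((n : ℤ) • (LinearMap.id : Y →ₗ[ℤ] Y)) ⊤) ⊗ₜ[ℤ]
      Additive.ofMul (ζ ^ q), ?_⟩
  rw [LinearMap.rTensor_tmul]
  have h3 : Submodule.inclusion hnY
      ⟨(n : ℤ) • snf.bM (snf.f j), ⟨snf.bM (snf.f j), trivial, by simp⟩⟩
      = r • snf.bN j := by
    ext
    simp only [Submodule.coe_inclusion, SetLike.val_smul, snf.snf j, ← mul_smul,
      smul_smul]
    rw [mul_comm r, hr]
  rw [h3, smul_tmul, ← hc]
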